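/- Let n, e, k be nonnegative integers with k² ≤ e ≤ k(k+1) and n ≥ 2k+1. Set β = e − k² and α = k − β. Then the code consisting of n − 2k − 1 zeros, followed by any word with α copies of a = 01 and β copies of b = 10, followed by one final (rightmost) digit, encodes a threshold graph on n vertices with exactly e edges. -/

import Mathlib

/-!
Common definitions: threshold graphs from binary codes, counts of matchings and
independent sets, lex and colex graphs, and almost alternating codes.

A binary code is a `List Bool` whose head is the *leftmost* (most significant,
last added) digit; `true` stands for the digit `1` and `false` for `0`.
Reading the code from right to left, each digit adds a vertex: a `1` adds a
dominating vertex and a `0` adds an isolated vertex.  Equivalently, the vertex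
at position `i` (from the left) is adjacent to every vertex to its right iff
its digit is `1`.  Note that the value of the rightmost digit (the star) never
affects the graph.
-/

/-- The threshold graph encoded by a binary code `σ`. -/
def threshOf (σ : List Bool) : SimpleGraph (Fin σ.length) where
  Adj i j := i ≠ j ∧ σ.get (min i j) = true
  symm := by
    constructor
    intro i j h
    refine ⟨h.1.symm, ?_⟩
    rw [min_comm]
    exact h.2
  loopless := by
    constructor
    intro i h
    exact h.1 rfl

/-- The number of edges of a graph. -/
noncomputable def edgeCount {V : Type*} (G : SimpleGraph V) : ℕ := Nat.card G.edgeSet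

/-- `M` is a matching of `G`: a set of pairwise disjoint edges of `G`. -/
def IsMatchingSet {V : Type*} (G : SimpleGraph V) (M : Finset (Sym2 V)) : Prop :=
  (∀ e ∈ M, e ∈ G.edgeSet) ∧ ∀ e ∈ M, ∀ f ∈ M, e ≠ f → ∀ v : V, v ∈ e → v ∉ f

/-- `m(G)`: the total number of matchings of `G` (including the empty matching). -/
noncomputable def matchCount {V : Type*} (G : SimpleGraph V) : ℕ :=
  Nat.card {M : Finset (Sym2 V) // IsMatchingSet G M}

/-- `m_k(G)`: the number of matchings of `G` of size `k`. -/
noncomputable def matchCountK {V : Type*} (G : SimpleGraph V) (k : ℕ) : ℕ :=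
  Nat.card {M : Finset (Sym2 V) // IsMatchingSet G M ∧ M.card = k}

/-- `i(G)`: the number of independent sets of `G` (including the empty set). -/
noncomputable def indCount {V : Type*} (G : SimpleGraph V) : ℕ :=
  Nat.card {S : Finset V // ∀ u ∈ S, ∀ v ∈ S, ¬ G.Adj u v}

/-- `i_k(G)`: the number of independent sets of `G` of size `k`. -/
noncomputable def indCountK {V : Type*} (G : SimpleGraph V) (k : ℕ) : ℕ :=
  Nat.card {S : Finset V // (∀ u ∈ S, ∀ v ∈ S, ¬ G.Adj u v) ∧ S.card = k}

/-- Two codes encode the same threshold graph: they have the same length and agree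
except possibly in the rightmost (starred) digit. -/
def CodeEquiv (σ τ : List Bool) : Prop := σ.length = τ.length ∧ σ.dropLast = τ.dropLast

/-- Words that are concatenations of copies of the letters `a = 01` and `b = 10`. -/
inductive IsABWord : List Bool → Prop
  | nil : IsABWord []
  | a {w : List Bool} : IsABWord w → IsABWord (false :: true :: w)
  | b {w : List Bool} : IsABWord w → IsABWord (true :: false :: w)

/-- `w` is a concatenation of `α` copies of the letter `a = 01` and `β` copies of the
letter `b = 10`, in some order. -/
def IsABWordWith (α β : ℕ) (w : List Bool) : Prop :=
  ∃ ls : List (List Bool), (∀ x ∈ ls, x = [false, true] ∨ x = [true, false]) ∧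
    ls.count [false, true] = α ∧ ls.count [true, false] = β ∧ w = ls.flatten

/-- A code is almost alternating if (possibly after reinterpreting the starred rightmost
digit) it is an initial constant block followed by a word in the letters `a = 01` and
`b = 10`, either using the rightmost digit as the final digit of the last letter
(unstarred case) or keeping the rightmost digit separate after the word (starred case). -/
def IsAlmostAltCode (σ : List Bool) : Prop :=
  ∃ τ : List Bool, CodeEquiv σ τ ∧
    ∃ (t : ℕ) (c : Bool) (w : List Bool), IsABWord w ∧
      (τ = List.replicate t c ++ w ∨ ∃ d : Bool, τ = List.replicate t c ++ w ++ [d])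

/-- A small almost alternating code: the initial block consists of `0`'s (or is empty). -/
def IsSmallAACode (σ : List Bool) : Prop :=
  ∃ τ : List Bool, CodeEquiv σ τ ∧
    ∃ (t : ℕ) (w : List Bool), IsABWord w ∧
      (τ = List.replicate t false ++ w ∨ ∃ d : Bool, τ = List.replicate t false ++ w ++ [d])

/-- A large almost alternating code: the initial block is a nonempty block of `1`'s. -/
def IsLargeAACode (σ : List Bool) : Prop :=
  ∃ τ : List Bool, CodeEquiv σ τ ∧
    ∃ (t : ℕ) (w : List Bool), 1 ≤ t ∧ IsABWord w ∧
      (τ = List.replicate t true ++ w ∨ ∃ d : Bool, τ = List.replicate t true ++ w ++ [d])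

/-- A code has a bracketed string if (possibly after reinterpreting the starred rightmost
digit) it contains a substring `1 0^j 1` or `0 1^j 0` with `j ≥ 3`. -/
def HasBracketedString (σ : List Bool) : Prop :=
  ∃ τ : List Bool, CodeEquiv σ τ ∧ ∃ (x y : List Bool) (j : ℕ), 3 ≤ j ∧
    (τ = x ++ [true] ++ List.replicate j false ++ [true] ++ y ∨
     τ = x ++ [false] ++ List.replicate j true ++ [false] ++ y)

/-- A code has a separation issue if it contains two pairs of repeated digits separated by
a substring of odd length, where the first pair is immediately preceded by the opposite
digit and the second pair is followed by at least one further digit. -/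
def HasSeparationIssue (σ : List Bool) : Prop :=
  ∃ (x m y : List Bool) (d c : Bool),
    Odd m.length ∧ y ≠ [] ∧ σ = x ++ [!d, d, d] ++ m ++ [c, c] ++ y

/-- The colex graph `C(n,e)`: the graph on `Fin n` whose edges are the first `e` pairs in
the colexicographic order.  The pair `{i, j}` with `i < j` has rank `j(j-1)/2 + i` in
this order. -/
def colexGraph (n e : ℕ) : SimpleGraph (Fin n) where
  Adj i j := i ≠ j ∧ max i.val j.val * (max i.val j.val - 1) / 2 + min i.val j.val < e
  symm := by
    constructor
    intro i j h
    refine ⟨h.1.symm, ?_⟩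
    rw [max_comm j.val i.val, min_comm j.val i.val]
    exact h.2
  loopless := by
    constructor
    intro i h
    exact h.1 rfl

/-- The lex graph `L(n,e)`: the graph on `Fin n` whose edges are the first `e` pairs in
the lexicographic order.  The pair `{i, j}` with `i < j` has rank
`i(n-1) - i(i-1)/2 + (j - i - 1)` in this order. -/
def lexGraph (n e : ℕ) : SimpleGraph (Fin n) where
  Adj i j := i ≠ j ∧
    min i.val j.val * (n - 1) - min i.val j.val * (min i.val j.val - 1) / 2
      + (max i.val j.val - min i.val j.val - 1) < e
  symm := by
    constructor
    intro i j h
    refine ⟨h.1.symm, ?_⟩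
    rw [max_comm j.val i.val, min_comm j.val i.val]
    exact h.2
  loopless := by
    constructor
    intro i h
    exact h.1 rfl

/-- If `k² ≤ e ≤ k(k+1)` and `n ≥ 2k+1`, then with `β = e − k²` and
`α = k − β`, the code made of `n − 2k − 1` zeros, followed by any word with `α` copies
of `a = 01` and `β` copies of `b = 10`, followed by one final (rightmost) digit,
encodes a threshold graph on `n` vertices with exactly `e` edges. -/
def gw (σ : List Bool) : ℕ :=
  ∑ i ∈ Finset.range σ.length, if σ.getD i false = true then σ.length - 1 - i else 0

lemma edgeCount_thresh (σ : List Bool) : edgeCount (threshOf σ) = gw σ := by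
  classical
  set n := σ.length with hn
  have e1 : (threshOf σ).edgeSet ≃
      {p : Fin n × Fin n // p.1 ≤ p.2 ∧ (threshOf σ).Adj p.1 p.2} := by
    have hcond : ∀ s : Sym2 (Fin n), s ∈ (threshOf σ).edgeSet ↔
        (threshOf σ).Adj (Sym2.sortEquiv s).1.1 (Sym2.sortEquiv s).1.2 := by
      intro s
      induction s using Sym2.ind with
      | _ a b =>
        simp only [SimpleGraph.mem_edgeSet, Sym2.sortEquiv_apply_coe]
        rcases le_total a b with h | h
        · simp [min_eq_left h, max_eq_right h, h]
        · rw [(threshOf σ).adj_comm]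
          simp [min_eq_right h, max_eq_left h, h]
    exact (Equiv.subtypeEquiv Sym2.sortEquiv hcond).trans
      (Equiv.subtypeSubtypeEquivSubtypeInter _ _)
  have e2 : edgeCount (threshOf σ) =
      (Finset.univ.filter fun p : Fin n × Fin n =>
        p.1 ≤ p.2 ∧ (threshOf σ).Adj p.1 p.2).card := by
    rw [edgeCount, Nat.card_congr e1, Nat.card_eq_fintype_card, Fintype.card_subtype]
  rw [e2, Finset.card_filter, Fintype.sum_prod_type]
  have e3 : ∀ i : Fin n, (∑ j : Fin n,
      if i ≤ j ∧ (threshOf σ).Adj i j then 1 else 0) =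
      (if σ.get i = true then n - 1 - i.val else 0) := by
    intro i
    have key : ∀ j : Fin n, (i ≤ j ∧ (threshOf σ).Adj i j) ↔ (σ.get i = true ∧ i < j) := by
      intro j
      constructor
      · rintro ⟨hle, hne, hget⟩
        have hlt : i < j := lt_of_le_of_ne hle hne
        rw [min_eq_left hle] at hget
        exact ⟨hget, hlt⟩
      · rintro ⟨hget, hlt⟩
        exact ⟨hlt.le, ⟨hlt.ne, by rwa [min_eq_left hlt.le]⟩⟩
    simp only [key]
    by_cases h : σ.get i = true
    · simp only [h, true_and, if_true]
      rw [← Finset.card_filter]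
      have : Finset.univ.filter (fun j : Fin n => i < j) = Finset.Ioi i := by
        ext j; simp
      rw [this, Fin.card_Ioi]
    · rw [List.get_eq_getElem] at h
      simp [h]
  rw [Finset.sum_congr rfl fun i _ => e3 i]
  rw [gw, ← Fin.sum_univ_eq_sum_range (fun i => if σ.getD i false = true then n - 1 - i else 0) n]
  refine Finset.sum_congr rfl fun i _ => ?_
  rw [List.getD_eq_getElem σ false i.isLt, List.get_eq_getElem]

lemma gw_nil : gw [] = 0 := rfl

lemma gw_cons (c : Bool) (L : List Bool) :
    gw (c :: L) = (if c then L.length else 0) + gw L := by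
  rw [gw, List.length_cons, Finset.sum_range_succ']
  have key : ∀ i ∈ Finset.range L.length,
      (if (c :: L).getD (i + 1) false = true then L.length + 1 - 1 - (i + 1) else 0)
        = (if L.getD i false = true then L.length - 1 - i else 0) := by
    intro i hi
    rw [List.getD_cons_succ]
    congr 1
    omega
  rw [Finset.sum_congr rfl key, ← gw, List.getD_cons_zero]
  cases c <;> simp [Nat.add_comm]

lemma gw_append (A B : List Bool) :
    gw (A ++ B) = gw A + B.length * A.count true + gw B := by
  induction A with
  | nil => simp [gw_nil]
  | cons c A ih =>
    rw [List.cons_append, gw_cons, ih, gw_cons, List.count_cons]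
    cases c <;> simp <;> ring_nf

lemma count_true_flatten (ls : List (List Bool))
    (h : ∀ x ∈ ls, x = [false, true] ∨ x = [true, false]) :
    ls.flatten.count true = ls.length := by
  induction ls with
  | nil => rfl
  | cons l ls ih =>
    rw [List.flatten_cons, List.count_append, ih (fun x hx => h x (List.mem_cons_of_mem _ hx))]
    rcases h l (List.mem_cons_self) with rfl | rfl <;> simp [List.count_cons] <;> omega

lemma length_flatten (ls : List (List Bool))
    (h : ∀ x ∈ ls, x = [false, true] ∨ x = [true, false]) :
    ls.flatten.length = 2 * ls.length := by
  induction ls with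
  | nil => rfl
  | cons l ls ih =>
    rw [List.flatten_cons, List.length_append, ih (fun x hx => h x (List.mem_cons_of_mem _ hx))]
    rcases h l (List.mem_cons_self) with rfl | rfl <;> simp <;> omega

lemma quad (m : ℕ) : (m + 1) * (m + 1 - 1) = m * (m - 1) + 2 * m := by
  cases m with
  | zero => rfl
  | succ s => simp only [Nat.succ_sub_one]; ring

lemma gw_flatten (ls : List (List Bool))
    (h : ∀ x ∈ ls, x = [false, true] ∨ x = [true, false]) :
    gw ls.flatten = ls.length * (ls.length - 1) + ls.count [true, false] := by
  induction ls with
  | nil => rfl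
  | cons l ls ih =>
    have h' : ∀ x ∈ ls, x = [false, true] ∨ x = [true, false] :=
      fun x hx => h x (List.mem_cons_of_mem _ hx)
    rw [List.flatten_cons, gw_append, ih h', length_flatten ls h', List.count_cons]
    have ha : gw [false, true] = 0 := rfl
    have hb : gw [true, false] = 1 := rfl
    rw [List.length_cons, quad]
    have hq : ∃ q, ls.length * (ls.length - 1) = q := ⟨_, rfl⟩
    obtain ⟨q, hq⟩ := hq
    rw [hq]
    rcases h l (List.mem_cons_self) with rfl | rfl
    · rw [ha]; simp; omega
    · rw [hb]; simp; omega

lemma gw_replicate_false (t : ℕ) : gw (List.replicate t false) = 0 := by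
  induction t with
  | zero => rfl
  | succ s ih => rw [List.replicate_succ, gw_cons, ih]; simp

lemma gw_single (d : Bool) : gw [d] = 0 := by
  cases d <;> rfl

lemma length_count_ab (ls : List (List Bool))
    (h : ∀ x ∈ ls, x = [false, true] ∨ x = [true, false]) :
    ls.length = ls.count [false, true] + ls.count [true, false] := by
  induction ls with
  | nil => rfl
  | cons l ls ih =>
    have h' := fun x hx => h x (List.mem_cons_of_mem l hx)
    rcases h l (List.mem_cons_self) with rfl | rfl <;>
      simp [List.count_cons, ih h'] <;> omega

lemma quad2 (k : ℕ) : k * (k - 1) + k = k * k := by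
  cases k with
  | zero => rfl
  | succ s => simp only [Nat.succ_sub_one]; ring

theorem starred_code_realizes (n e k : ℕ) (h1 : k ^ 2 ≤ e) (h2 : e ≤ k * (k + 1))
    (h3 : 2 * k + 1 ≤ n) (w : List Bool) (d : Bool)
    (hw : IsABWordWith (k - (e - k ^ 2)) (e - k ^ 2) w) :
    (List.replicate (n - 2 * k - 1) false ++ w ++ [d]).length = n ∧
      edgeCount (threshOf (List.replicate (n - 2 * k - 1) false ++ w ++ [d])) = e := by
  classical
  obtain ⟨ls, hls, hca, hcb, rfl⟩ := hw
  set t := n - 2 * k - 1 with ht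
  have h5 : k ^ 2 = k * k := sq k
  have key : k * (k + 1) = k * k + k := by ring
  rw [h5] at h1
  have hβ : e - k ^ 2 ≤ k := by rw [h5]; omega
  have hlen_ls : ls.length = k := by
    rw [length_count_ab ls hls, hca, hcb]; omega
  have hwlen : ls.flatten.length = 2 * k := by
    rw [length_flatten ls hls, hlen_ls]
  have hwcount : ls.flatten.count true = k := by
    rw [count_true_flatten ls hls, hlen_ls]
  constructor
  · simp only [List.length_append, List.length_replicate, List.length_cons,
      List.length_nil, hwlen]
    omega
  · rw [edgeCount_thresh, gw_append, gw_append, gw_single, gw_replicate_false,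
      List.count_append, gw_flatten ls hls, hcb, hlen_ls, hwcount]
    have h4 := quad2 k
    simp only [List.count_replicate, List.length_singleton, h5]
    norm_num
    omega
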